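/- Let (μ_t)_{t≥0} be the Fisher-Rao gradient flow of cᵀμ over P = Δ_X ∩ L and let F* be the face of maximizers. Then μ_t converges as t → ∞ to the information projection of μ_0 to F*, i.e., lim_{t→∞} μ_t = argmin{D_KL(μ, μ_0) : μ ∈ F*}. -/

import Mathlib

open Finset Filter

/-- Kullback-Leibler divergence on the probability simplex. -/
noncomputable def klDiv {X : Type*} [Fintype X] (μ ν : X → ℝ) : ℝ :=
  ∑ x, μ x * Real.log (μ x / ν x)

/-- The linear objective `μ ↦ cᵀμ`. -/
def linVal {X : Type*} [Fintype X] (c μ : X → ℝ) : ℝ := ∑ x, c x * μ x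

private lemma gibbs_term {p ν : ℝ} (hp : 0 ≤ p) (hν : 0 < ν) :
    p - ν ≤ p * Real.log (p / ν) := by
  rcases eq_or_lt_of_le hp with h | h
  · simp [← h]; linarith
  · have h1 : Real.log (ν / p) ≤ ν / p - 1 := Real.log_le_sub_one_of_pos (by positivity)
    have h2 : p * Real.log (p / ν) = -(p * Real.log (ν / p)) := by
      rw [Real.log_div (ne_of_gt hν) (ne_of_gt h), Real.log_div (ne_of_gt h) (ne_of_gt hν)]; ring
    have h3 := mul_le_mul_of_nonneg_left h1 hp
    have h4 : p * (ν / p - 1) = ν - p := by field_simp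
    rw [h2]; linarith [h4 ▸ h3]

private lemma klDiv_nonneg' {X : Type*} [Fintype X] {p ν : X → ℝ} (hp : ∀ x, 0 ≤ p x)
    (hν : ∀ x, 0 < ν x) (hps : ∑ x, p x = 1) (hνs : ∑ x, ν x = 1) : 0 ≤ klDiv p ν := by
  have h : ∑ x, (p x - ν x) ≤ klDiv p ν :=
    Finset.sum_le_sum fun x _ => gibbs_term (hp x) (hν x)
  rwa [Finset.sum_sub_distrib, hps, hνs, sub_self] at h

private lemma klDiv_eq' {X : Type*} [Fintype X] {p ν : X → ℝ} (hp : ∀ x, 0 ≤ p x)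
    (hν : ∀ x, 0 < ν x) :
    klDiv p ν = ∑ x, (p x * Real.log (p x) - p x * Real.log (ν x)) := by
  refine Finset.sum_congr rfl fun x _ => ?_
  rcases eq_or_lt_of_le (hp x) with h | h
  · simp [← h]
  · rw [Real.log_div (ne_of_gt h) (ne_of_gt (hν x))]; ring

private lemma mid_strict {u v ν : ℝ} (hu : 0 ≤ u) (hv : 0 ≤ v) (huv : u ≠ v) :
    (u+v)/2 * Real.log ((u+v)/2) - (u+v)/2 * Real.log ν
      < ((u * Real.log u - u * Real.log ν) + (v * Real.log v - v * Real.log ν))/2 := by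
  have h := Real.strictConvexOn_mul_log.2 (Set.mem_Ici.mpr hu) (Set.mem_Ici.mpr hv) huv
      (by norm_num : (0:ℝ) < 1/2) (by norm_num : (0:ℝ) < 1/2) (by norm_num)
  simp only [smul_eq_mul] at h
  have he : (1/2 : ℝ) * u + 1/2 * v = (u+v)/2 := by ring
  rw [he] at h
  linarith

private lemma clusterPt_mem_closed {α : Type*} [TopologicalSpace α] {a : α} {F : Filter α}
    {C : Set α} (h : ClusterPt a F) (hC : C ∈ F) (hcl : IsClosed C) : a ∈ C := by
  have h2 : ClusterPt a (𝓟 C) := h.mono (le_principal_iff.mpr hC)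
  rw [← hcl.closure_eq]; exact mem_closure_iff_clusterPt.mpr h2

private lemma eq_of_min {X : Type*} [Fintype X] {c μ0 a μhat : X → ℝ}
    {L : AffineSubspace ℝ (X → ℝ)}
    (hμ0pos : ∀ x, 0 < μ0 x)
    (hann : ∀ x, 0 ≤ a x) (hasum : ∑ x, a x = 1) (haL : a ∈ L)
    (hhnn : ∀ x, 0 ≤ μhat x) (hhsum : ∑ x, μhat x = 1) (hhL : μhat ∈ L)
    (hvaleq : linVal c a = linVal c μhat)
    (haKL : klDiv a μ0 ≤ klDiv μhat μ0)
    (hmin : ∀ p, (((∀ x, 0 ≤ p x) ∧ ∑ x, p x = 1 ∧ p ∈ L) ∧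
        ∀ q, ((∀ x, 0 ≤ q x) ∧ ∑ x, q x = 1 ∧ q ∈ L) → linVal c q ≤ linVal c p) →
        klDiv μhat μ0 ≤ klDiv p μ0)
    (hmax : ∀ q, ((∀ x, 0 ≤ q x) ∧ ∑ x, q x = 1 ∧ q ∈ L) → linVal c q ≤ linVal c μhat) :
    a = μhat := by
  by_contra hne
  obtain ⟨x0, hx0⟩ := Function.ne_iff.mp hne
  set m : X → ℝ := fun x => (a x + μhat x)/2 with hm
  have hmnn : ∀ x, 0 ≤ m x := fun x => by
    simp only [hm]; exact div_nonneg (add_nonneg (hann x) (hhnn x)) (by norm_num)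
  have hmsum : ∑ x, m x = 1 := by
    simp only [hm]
    rw [← Finset.sum_div, Finset.sum_add_distrib, hasum, hhsum]; norm_num
  have hmL : m ∈ L := by
    have h := L.smul_vsub_vadd_mem (1/2 : ℝ) haL hhL hhL
    have he : ((1/2 : ℝ) • (a -ᵥ μhat) +ᵥ μhat) = m := by
      funext x
      simp only [hm, vsub_eq_sub, vadd_eq_add, Pi.add_apply, Pi.smul_apply, Pi.sub_apply,
        smul_eq_mul]
      ring
    rwa [he] at h
  have hmval : linVal c m = linVal c μhat := by
    have : linVal c m = (linVal c a + linVal c μhat)/2 := by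
      simp only [linVal, hm]
      rw [← Finset.sum_add_distrib, Finset.sum_div]
      exact Finset.sum_congr rfl fun x _ => by ring
    rw [this, hvaleq]; ring
  have hmmax : ∀ q, ((∀ x, 0 ≤ q x) ∧ ∑ x, q x = 1 ∧ q ∈ L) → linVal c q ≤ linVal c m :=
    fun q hq => hmval ▸ hmax q hq
  have hmin' := hmin m ⟨⟨hmnn, hmsum, hmL⟩, hmmax⟩
  have hlt : klDiv m μ0 < klDiv μhat μ0 := by
    rw [klDiv_eq' hmnn hμ0pos]
    have hlt2 : ∑ x, (m x * Real.log (m x) - m x * Real.log (μ0 x))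
        < ∑ x, ((a x * Real.log (a x) - a x * Real.log (μ0 x))
            + (μhat x * Real.log (μhat x) - μhat x * Real.log (μ0 x)))/2 := by
      apply Finset.sum_lt_sum
      · intro x _
        rcases eq_or_ne (a x) (μhat x) with h | h
        · simp only [hm, h]
          have he : (μhat x + μhat x)/2 = μhat x := by ring
          rw [he]; exact le_of_eq (by ring)
        · exact (mid_strict (hann x) (hhnn x) h).le
      · exact ⟨x0, Finset.mem_univ x0, mid_strict (hann x0) (hhnn x0) hx0⟩
    have he : ∑ x, ((a x * Real.log (a x) - a x * Real.log (μ0 x))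
            + (μhat x * Real.log (μhat x) - μhat x * Real.log (μ0 x)))/2
        = (klDiv a μ0 + klDiv μhat μ0)/2 := by
      rw [klDiv_eq' hann hμ0pos, klDiv_eq' hhnn hμ0pos, ← Finset.sum_add_distrib,
        ← Finset.sum_div]
    rw [he] at hlt2
    linarith
  linarith


theorem stmt13 {X : Type*} [Fintype X]
    (c : X → ℝ) (L : AffineSubspace ℝ (X → ℝ))
    -- `P = Δ_X ∩ L`
    (P : Set (X → ℝ)) (hP : P = {p | (∀ x, 0 ≤ p x) ∧ ∑ x, p x = 1 ∧ p ∈ L})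
    -- the Fisher-Rao gradient flow `(μ_t)_{t≥0}`, started at `μ_0 ∈ P ∩ ℝ^X_{>0}`,
    -- encoded via the central path property
    (μ : ℝ → X → ℝ) (μ0 : X → ℝ)
    (hinit : μ 0 = μ0) (hμ0pos : ∀ x, 0 < μ0 x) (hμ0P : μ0 ∈ P)
    (hμP : ∀ t > (0:ℝ), μ t ∈ P) (hpos : ∀ t > (0:ℝ), ∀ x, 0 < μ t x)
    (hcp : ∀ t > (0:ℝ), ∀ p ∈ P,
      linVal c p - t⁻¹ * klDiv p μ0 ≤ linVal c (μ t) - t⁻¹ * klDiv (μ t) μ0)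
    -- `F*` is the face of maximizers
    (Fstar : Set (X → ℝ))
    (hF : Fstar = {p | p ∈ P ∧ ∀ q ∈ P, linVal c q ≤ linVal c p})
    -- `μ̂` is the information projection of `μ_0` to `F*`
    (μhat : X → ℝ) (hhatF : μhat ∈ Fstar)
    (hhatmin : ∀ p ∈ Fstar, klDiv μhat μ0 ≤ klDiv p μ0) :
    Tendsto μ atTop (nhds μhat) := by
  subst hF
  rw [Set.mem_setOf_eq] at hhatF
  obtain ⟨hhatP, hhatmax⟩ := hhatF
  have hhat := hP ▸ hhatP
  obtain ⟨hhnn, hhsum, hhL⟩ : (∀ x, 0 ≤ μhat x) ∧ ∑ x, μhat x = 1 ∧ μhat ∈ L := hhat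
  have hμ0sum : ∑ x, μ0 x = 1 := (hP ▸ hμ0P).2.1
  -- basic estimates along the flow
  have hKLt0 : ∀ t > (0:ℝ), 0 ≤ klDiv (μ t) μ0 := fun t ht => by
    obtain ⟨h1, h2, _⟩ := hP ▸ hμP t ht
    exact klDiv_nonneg' h1 hμ0pos h2 hμ0sum
  have hKLhat0 : 0 ≤ klDiv μhat μ0 := klDiv_nonneg' hhnn hμ0pos hhsum hμ0sum
  have hklle : ∀ t > (0:ℝ), klDiv (μ t) μ0 ≤ klDiv μhat μ0 := by
    intro t ht
    have h1 := hcp t ht μhat hhatP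
    have h2 := hhatmax (μ t) (hμP t ht)
    have h3 : t⁻¹ * klDiv (μ t) μ0 ≤ t⁻¹ * klDiv μhat μ0 := by linarith
    exact le_of_mul_le_mul_left h3 (inv_pos.mpr ht)
  have hval : ∀ t > (0:ℝ), linVal c μhat - t⁻¹ * klDiv μhat μ0 ≤ linVal c (μ t) := by
    intro t ht
    have h1 := hcp t ht μhat hhatP
    have h2 := mul_nonneg (inv_pos.mpr ht).le (hKLt0 t ht)
    linarith
  -- topology of P
  have hPclosed : IsClosed P := by
    have e : P = (⋂ x, {p : X → ℝ | 0 ≤ p x}) ∩ ({p | ∑ x, p x = 1} ∩ (L : Set (X → ℝ))) := by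
      rw [hP]; ext p; simp [Set.mem_iInter]
    rw [e]
    exact (isClosed_iInter fun x => isClosed_le continuous_const (continuous_apply x)).inter
      ((isClosed_eq (continuous_finset_sum _ fun x _ => continuous_apply x)
        continuous_const).inter L.closed_of_finiteDimensional)
  have hPcomp : IsCompact P := by
    refine IsCompact.of_isClosed_subset
      (isCompact_univ_pi fun _ : X => isCompact_Icc (a := (0:ℝ)) (b := 1)) hPclosed ?_
    intro p hp
    obtain ⟨h1, h2, _⟩ := hP ▸ hp
    rw [Set.mem_univ_pi]
    intro x
    refine ⟨h1 x, ?_⟩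
    calc p x ≤ ∑ y, p y := Finset.single_le_sum (fun y _ => h1 y) (Finset.mem_univ x)
    _ = 1 := h2
  have hlinCont : Continuous (linVal c) :=
    continuous_finset_sum _ fun x _ => continuous_const.mul (continuous_apply x)
  have hgCont : Continuous (fun q : X → ℝ =>
      ∑ x, (q x * Real.log (q x) - q x * Real.log (μ0 x))) :=
    continuous_finset_sum _ fun x _ =>
      (Real.continuous_mul_log.comp (continuous_apply x)).sub
        ((continuous_apply x).mul continuous_const)
  -- main argument
  rw [Metric.tendsto_nhds]
  by_contra hcon
  push_neg at hcon
  obtain ⟨ε, hε, hfreq⟩ := hcon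
  have hfreq' : ∃ᶠ t in atTop, ε ≤ dist (μ t) μhat := hfreq
  set S : Set (X → ℝ) := P ∩ {q | ε ≤ dist q μhat} with hS
  have hevP : ∀ᶠ t in atTop, μ t ∈ P :=
    eventually_atTop.mpr ⟨1, fun t ht => hμP t (lt_of_lt_of_le one_pos ht)⟩
  have hfreqS : ∃ᶠ t in atTop, μ t ∈ S :=
    (hfreq'.and_eventually hevP).mono fun t ht => ⟨ht.2, ht.1⟩
  have hSclosed : IsClosed S :=
    hPclosed.inter (isClosed_le continuous_const (continuous_id.dist continuous_const))
  have hScomp : IsCompact S := hPcomp.of_isClosed_subset hSclosed Set.inter_subset_left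
  have hFne : NeBot (map μ atTop ⊓ 𝓟 S) :=
    frequently_iff_neBot.mp (frequently_map.mpr hfreqS)
  obtain ⟨a, haS, haCl⟩ := hScomp.exists_clusterPt (f := map μ atTop ⊓ 𝓟 S) inf_le_right
  obtain ⟨haP, hadist⟩ := haS
  have haP' := haP
  rw [hP] at haP'
  obtain ⟨hann, hasum, haL⟩ := haP'
  -- a attains the max value
  have hamax : linVal c μhat ≤ linVal c a := by
    refine le_of_forall_pos_le_add ?_
    intro δ hδ
    have hev : ∀ᶠ t in atTop, μ t ∈ {q | linVal c μhat - δ ≤ linVal c q} := by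
      rw [eventually_atTop]
      refine ⟨max 1 (klDiv μhat μ0 / δ), fun t ht => ?_⟩
      have ht1 : (1:ℝ) ≤ t := le_trans (le_max_left _ _) ht
      have ht0 : (0:ℝ) < t := lt_of_lt_of_le one_pos ht1
      have htd : klDiv μhat μ0 / δ ≤ t := le_trans (le_max_right _ _) ht
      have h2 : klDiv μhat μ0 ≤ t * δ := by
        rw [div_le_iff₀ hδ] at htd; linarith
      have h3 : t⁻¹ * klDiv μhat μ0 ≤ δ := by
        rw [inv_mul_le_iff₀ ht0]; linarith [h2]
      have := hval t ht0
      simp only [Set.mem_setOf_eq]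
      linarith
    have hmem : {q | linVal c μhat - δ ≤ linVal c q} ∈ map μ atTop ⊓ 𝓟 S :=
      mem_inf_of_left (mem_map.mpr hev)
    have := clusterPt_mem_closed haCl hmem (isClosed_le continuous_const hlinCont)
    simp only [Set.mem_setOf_eq] at this
    linarith
  have hvaleq : linVal c a = linVal c μhat := le_antisymm (hhatmax a haP) hamax
  -- KL bound on a
  have haKL : klDiv a μ0 ≤ klDiv μhat μ0 := by
    have hev : ∀ᶠ t in atTop, μ t ∈ {q | (fun q : X → ℝ =>
        ∑ x, (q x * Real.log (q x) - q x * Real.log (μ0 x))) q ≤ klDiv μhat μ0} := by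
      refine hevP.mp (eventually_atTop.mpr ⟨1, fun t ht hmem => ?_⟩)
      have ht0 : (0:ℝ) < t := lt_of_lt_of_le one_pos ht
      obtain ⟨h1, _, _⟩ := hP ▸ hmem
      simp only [Set.mem_setOf_eq]
      rw [← klDiv_eq' h1 hμ0pos]
      exact hklle t ht0
    have hmem : _ ∈ map μ atTop ⊓ 𝓟 S := mem_inf_of_left (mem_map.mpr hev)
    have := clusterPt_mem_closed haCl hmem (isClosed_le hgCont continuous_const)
    simp only [Set.mem_setOf_eq] at this
    rwa [klDiv_eq' hann hμ0pos]
  -- uniqueness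
  have hmax' : ∀ q, ((∀ x, 0 ≤ q x) ∧ ∑ x, q x = 1 ∧ q ∈ L) → linVal c q ≤ linVal c μhat :=
    fun q hq => hhatmax q (hP ▸ hq)
  have hmin' : ∀ p, (((∀ x, 0 ≤ p x) ∧ ∑ x, p x = 1 ∧ p ∈ L) ∧
      ∀ q, ((∀ x, 0 ≤ q x) ∧ ∑ x, q x = 1 ∧ q ∈ L) → linVal c q ≤ linVal c p) →
      klDiv μhat μ0 ≤ klDiv p μ0 := by
    intro p hp
    refine hhatmin p ?_
    exact ⟨hP ▸ hp.1, fun q hq => hp.2 q (by rw [hP] at hq; exact hq)⟩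
  have : a = μhat :=
    eq_of_min hμ0pos hann hasum haL hhnn hhsum hhL hvaleq haKL hmin' hmax'
  rw [this] at hadist
  simp only [dist_self, Set.mem_setOf_eq] at hadist
  linarith
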